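/- Let a > 0 and β > 0. For each fixed y ≤ 0, the function t ↦ errfn((y+at)/√(4βt)) − errfn((y−at)/√(4βt)) converges to √π/(2π) as t → ∞, and there exist constants C, M, α > 0 such that for all y ≤ 0 and all t > 0: | errfn( (y+at)/√(4βt) ) − errfn( (y−at)/√(4βt) ) − √π/(2π) | ≤ C errfn( (−y − αt)/(M√t) ). -/

import Mathlib

open MeasureTheory Set

noncomputable def errfn (z : ℝ) : ℝ :=
  (1 / (2 * Real.pi)) * ∫ ξ in Set.Iic z, Real.exp (-ξ^2)

lemma gauss_integrable : Integrable (fun ξ : ℝ => Real.exp (-ξ^2)) := by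
  have := integrable_exp_neg_mul_sq (by norm_num : (0:ℝ) < 1)
  simpa using this

lemma gauss_total : (∫ ξ : ℝ, Real.exp (-ξ^2)) = Real.sqrt Real.pi := by
  have := integral_gaussian 1
  simpa using this

lemma errfn_nonneg (z : ℝ) : 0 ≤ errfn z := by
  apply mul_nonneg
  · positivity
  · exact setIntegral_nonneg measurableSet_Iic fun x _ => (Real.exp_pos _).le

lemma errfn_mono : Monotone errfn := by
  intro x y hxy
  apply mul_le_mul_of_nonneg_left _ (by positivity)
  apply setIntegral_mono_set (gauss_integrable.integrableOn)
  · exact Filter.Eventually.of_forall fun x => (Real.exp_pos _).le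
  · exact Filter.Eventually.of_forall (Iic_subset_Iic.mpr hxy)

lemma errfn_add_neg (z : ℝ) :
    errfn z + errfn (-z) = Real.sqrt Real.pi / (2 * Real.pi) := by
  have h1 : (∫ ξ in Set.Iic (-z), Real.exp (-ξ^2))
      = ∫ ξ in Set.Ioi z, Real.exp (-ξ^2) := by
    have := integral_comp_neg_Iic (-z) (fun ξ => Real.exp (-ξ^2))
    simpa using this
  have h2 : (∫ ξ in Set.Iic z, Real.exp (-ξ^2)) + (∫ ξ in Set.Ioi z, Real.exp (-ξ^2))
      = Real.sqrt Real.pi := by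
    rw [intervalIntegral.integral_Iic_add_Ioi gauss_integrable.integrableOn
      gauss_integrable.integrableOn, gauss_total]
  unfold errfn
  rw [h1, ← mul_add, h2]
  ring

lemma errfn_tendsto_atTop :
    Filter.Tendsto errfn Filter.atTop (nhds (Real.sqrt Real.pi / (2 * Real.pi))) := by
  have h : Filter.Tendsto (fun z : ℝ => ∫ ξ in Set.Iic z, Real.exp (-ξ^2))
      Filter.atTop (nhds (∫ ξ in ⋃ z : ℝ, Set.Iic z, Real.exp (-ξ^2))) := by
    exact tendsto_setIntegral_of_monotone (fun z => measurableSet_Iic)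
      (fun x y hxy => Iic_subset_Iic.mpr hxy) (gauss_integrable.integrableOn)
  have hU : (⋃ z : ℝ, Set.Iic z) = Set.univ := iUnion_Iic
  rw [hU] at h
  have h2 : (∫ ξ in (Set.univ : Set ℝ), Real.exp (-ξ^2)) = Real.sqrt Real.pi := by
    rw [setIntegral_univ, gauss_total]
  rw [h2] at h
  have := h.const_mul (1 / (2 * Real.pi))
  convert this using 2
  · rfl
  · ring

lemma errfn_tendsto_atBot :
    Filter.Tendsto errfn Filter.atBot (nhds 0) := by
  have h : Filter.Tendsto (fun z : ℝ => Real.sqrt Real.pi / (2 * Real.pi) - errfn (-z))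
      Filter.atBot (nhds (Real.sqrt Real.pi / (2 * Real.pi) - Real.sqrt Real.pi / (2 * Real.pi))) := by
    exact Filter.Tendsto.const_sub _
      (errfn_tendsto_atTop.comp Filter.tendsto_neg_atBot_atTop)
  rw [sub_self] at h
  refine h.congr fun z => ?_
  have := errfn_add_neg z
  linarith

lemma sqrt_tendsto_atTop : Filter.Tendsto Real.sqrt Filter.atTop Filter.atTop := by
  rw [Filter.tendsto_atTop_atTop]
  intro b
  exact ⟨b^2, fun a ha =>
    (le_abs_self b).trans ((Real.sqrt_sq_eq_abs b) ▸ Real.sqrt_le_sqrt ha)⟩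

theorem errfn_pair_limit (a β : ℝ) (ha : 0 < a) (hβ : 0 < β) :
    (∀ y : ℝ, y ≤ 0 →
      Filter.Tendsto (fun t : ℝ =>
          errfn ((y + a*t) / Real.sqrt (4*β*t)) -
          errfn ((y - a*t) / Real.sqrt (4*β*t)))
        Filter.atTop (nhds (Real.sqrt Real.pi / (2*Real.pi)))) ∧
    ∃ C > 0, ∃ M > 0, ∃ α > 0, ∀ y : ℝ, y ≤ 0 → ∀ t : ℝ, 0 < t →
      |errfn ((y + a*t) / Real.sqrt (4*β*t)) -
        errfn ((y - a*t) / Real.sqrt (4*β*t)) -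
        Real.sqrt Real.pi / (2*Real.pi)| ≤
          C * errfn ((-y - α*t) / (M * Real.sqrt t)) := by
  have h4β : (0:ℝ) < 4 * β := by linarith
  have hsq : ∀ t : ℝ, 0 < t → Real.sqrt (4*β*t) = Real.sqrt (4*β) * Real.sqrt t := by
    intro t ht; exact Real.sqrt_mul h4β.le t
  constructor
  · intro y hy
    have hz1 : Filter.Tendsto (fun t : ℝ => (y + a*t) / Real.sqrt (4*β*t))
        Filter.atTop Filter.atTop := by
      have h1 : Filter.Tendsto (fun t : ℝ => (y / Real.sqrt t + a * Real.sqrt t) / Real.sqrt (4*β))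
          Filter.atTop Filter.atTop := by
        apply Filter.Tendsto.atTop_div_const (Real.sqrt_pos.mpr h4β)
        apply Filter.Tendsto.add_atTop
        · exact Filter.Tendsto.div_atTop tendsto_const_nhds sqrt_tendsto_atTop
        · exact sqrt_tendsto_atTop.const_mul_atTop ha
      refine h1.congr' ?_
      filter_upwards [Filter.eventually_gt_atTop 0] with t ht
      have h2 : a * Real.sqrt t = a * t / Real.sqrt t := by
        rw [mul_div_assoc, Real.div_sqrt]
      rw [hsq t ht, h2, ← add_div, div_div, mul_comm (Real.sqrt t)]
    have hz2 : Filter.Tendsto (fun t : ℝ => (y - a*t) / Real.sqrt (4*β*t))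
        Filter.atTop Filter.atBot := by
      have h1 : Filter.Tendsto (fun t : ℝ => (y / Real.sqrt t - a * Real.sqrt t) / Real.sqrt (4*β))
          Filter.atTop Filter.atBot := by
        apply Filter.Tendsto.atBot_div_const (Real.sqrt_pos.mpr h4β)
        have hd : Filter.Tendsto (fun t : ℝ => y / Real.sqrt t) Filter.atTop (nhds 0) :=
          Filter.Tendsto.div_atTop tendsto_const_nhds sqrt_tendsto_atTop
        have hneg : Filter.Tendsto (fun t : ℝ => -(a * Real.sqrt t))
            Filter.atTop Filter.atBot :=
          Filter.tendsto_neg_atTop_atBot.comp (sqrt_tendsto_atTop.const_mul_atTop ha)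
        exact (Filter.Tendsto.add_atBot hd hneg).congr fun t => (sub_eq_add_neg _ _).symm
      refine h1.congr' ?_
      filter_upwards [Filter.eventually_gt_atTop 0] with t ht
      have h2 : a * Real.sqrt t = a * t / Real.sqrt t := by
        rw [mul_div_assoc, Real.div_sqrt]
      rw [hsq t ht, h2, div_sub_div_same, div_div, mul_comm (Real.sqrt t)]
    have := (errfn_tendsto_atTop.comp hz1).sub (errfn_tendsto_atBot.comp hz2)
    simpa using this
  · refine ⟨2, by norm_num, Real.sqrt (4*β), Real.sqrt_pos.mpr h4β, a, ha, ?_⟩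
    intro y hy t ht
    set z1 := (y + a*t) / Real.sqrt (4*β*t) with hz1
    set z2 := (y - a*t) / Real.sqrt (4*β*t) with hz2
    have hden : 0 < Real.sqrt (4*β*t) := Real.sqrt_pos.mpr (by positivity)
    have hsymm := errfn_add_neg z1
    have key : errfn z1 - errfn z2 - Real.sqrt Real.pi / (2*Real.pi)
        = -(errfn (-z1) + errfn z2) := by linarith
    rw [key, abs_neg, abs_of_nonneg (by linarith [errfn_nonneg (-z1), errfn_nonneg z2])]
    have hneg : -z1 = (-y - a*t) / Real.sqrt (4*β*t) := by
      rw [hz1]; ring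
    have hle : z2 ≤ -z1 := by
      rw [hneg, hz2]
      gcongr; linarith
    have hbound : errfn (-z1) + errfn z2 ≤ 2 * errfn (-z1) := by
      have := errfn_mono hle
      linarith
    refine hbound.trans ?_
    have heq : -z1 = (-y - a*t) / (Real.sqrt (4*β) * Real.sqrt t) := by
      rw [hneg, hsq t ht]
    rw [heq]
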